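/- Let R be a commutative ring with a translation-invariant partial order on its additive group such that R⁺ is stable under multiplication with squares (r²s ∈ R⁺ whenever r ∈ R, s ∈ R⁺). If R is archimedean and localizable, then pq ∈ R⁺ for all p, q ∈ R⁺; in particular R is a partially ordered commutative ring. -/

import Mathlib

/-- If the positive cone is stable under multiplication with squares and the ring is
archimedean and localizable, then the positive cone is closed under multiplication. -/
theorem stmt_4 (R : Type*) [CommRing R] [PartialOrder R]
    [CovariantClass R R (· + ·) (· ≤ ·)]
    (hsqmul : ∀ r s : R, 0 ≤ s → 0 ≤ r ^ 2 * s)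
    (harch : ∀ g h : R, (∀ k : ℕ, 1 ≤ k → 0 ≤ (k : R) * g + h) → 0 ≤ g)
    (hloc : ∀ r : R, ∃ s : R, (∃ t : R, 0 ≤ t ∧ s = 1 + t) ∧
      (∀ r' : R, 0 ≤ r' * s → 0 ≤ r') ∧ -s ≤ r ∧ r ≤ s) :
    ∀ p q : R, 0 ≤ p → 0 ≤ q → 0 ≤ p * q := by
  -- basic order helpers
  have hadd : ∀ a b : R, 0 ≤ a → 0 ≤ b → 0 ≤ a + b := by
    intro a b ha hb
    calc (0:R) ≤ a := ha
    _ = a + 0 := (add_zero a).symm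
    _ ≤ a + b := add_le_add_right hb a
  have hsub : ∀ a b : R, a ≤ b → 0 ≤ b - a := by
    intro a b h
    have := add_le_add_left h (-a)
    simpa using this
  have hsub' : ∀ a b : R, 0 ≤ b - a → a ≤ b := by
    intro a b h
    have := add_le_add_left h a
    simpa using this
  -- 0 ≤ 1
  obtain ⟨s₀, ⟨t₀, ht₀, hs₀eq⟩, hs₀loc, hs₀lb, hs₀ub⟩ := hloc 0
  have one : (0:R) ≤ 1 := hs₀loc 1 (by rw [one_mul]; exact hs₀ub)
  -- squares are nonnegative
  have hsq : ∀ x : R, 0 ≤ x ^ 2 := by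
    intro x
    simpa using hsqmul x 1 one
  -- natural multiples of nonnegatives are nonnegative
  have posN : ∀ (n : ℕ) (x : R), 0 ≤ x → 0 ≤ (n : R) * x := by
    intro n x hx
    induction n with
    | zero => simp
    | succ n ih =>
      have h : ((n+1 : ℕ) : R) * x = (n : R) * x + x := by push_cast; ring
      rw [h]
      exact hadd _ _ ih hx
  -- Lemma A: "division" by a positive natural number
  have lemA : ∀ (K : ℕ), 1 ≤ K → ∀ r : R, 0 ≤ (K : R) * r → 0 ≤ r := by
    intro K hK r hKr
    obtain ⟨s', ⟨t', ht', hst'⟩, hs'loc, hlb', hub'⟩ := hloc r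
    have hs' : (0:R) ≤ s' := by rw [hst']; exact hadd 1 t' one ht'
    apply harch r ((K : R) * s')
    intro j hj
    set m := j / K + 1 with hm
    have hdm : K * (j / K) + j % K = j := Nat.div_add_mod j K
    have hmod : j % K < K := Nat.mod_lt j (by omega)
    have hmK : m * K = K * (j / K) + K := by rw [hm]; ring
    set i := m * K - j with hi
    have hiK : i ≤ K := by omega
    have hji : j + i = m * K := by omega
    have hcast : (j : R) + (i : R) = (m : R) * (K : R) := by exact_mod_cast congrArg (fun n : ℕ => (n : R)) hji
    have key : (j : R) * r + (K : R) * s'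
        = (m : R) * ((K : R) * r) + (i : R) * (s' - r) + ((K - i : ℕ) : R) * s' := by
      rw [Nat.cast_sub hiK]
      linear_combination r * hcast
    rw [key]
    exact hadd _ _ (hadd _ _ (posN m _ hKr) (posN i _ (hsub r s' hub'))) (posN (K - i) _ hs')
  -- complementary products: u + v = W with W localizable
  have hcomp : ∀ W : R, (∀ r : R, 0 ≤ r * W → 0 ≤ r) →
      ∀ u v : R, 0 ≤ u → 0 ≤ v → u + v = W → 0 ≤ u * v := by
    intro W hW u v hu hv huv
    apply hW (u * v)
    have h : u * v * W = u ^ 2 * v + v ^ 2 * u := by linear_combination (-(u * v)) * huv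
    rw [h]
    exact hadd _ _ (hsqmul u v hv) (hsqmul v u hu)
  -- complementary products: u + v = 2W with W localizable
  have hcomp2 : ∀ W : R, (∀ r : R, 0 ≤ r * W → 0 ≤ r) →
      ∀ u v : R, 0 ≤ u → 0 ≤ v → u + v = 2 * W → 0 ≤ u * v := by
    intro W hW u v hu hv huv
    have h2 : 0 ≤ 2 * (u * v) := by
      apply hW
      have h : 2 * (u * v) * W = u ^ 2 * v + v ^ 2 * u := by linear_combination (-(u * v)) * huv
      rw [h]
      exact hadd _ _ (hsqmul u v hv) (hsqmul v u hu)
    apply lemA 2 (by norm_num)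
    exact_mod_cast h2
  -- key iteration lemma
  have lemC : ∀ n : ℕ, ∀ W x y : R, (∀ r : R, 0 ≤ r * W → 0 ≤ r) →
      0 ≤ x → 0 ≤ y → x ≤ W → y ≤ W → 0 ≤ (2 * 4 ^ n : R) ^ 2 * (x * y) + W ^ 2 := by
    intro n
    induction n with
    | zero =>
      intro W x y hW hx hy hxW hyW
      have h1 : 0 ≤ W - (x - y) := by
        have hxy : x - y ≤ x := by
          have := add_le_add_left hy (x - y)
          simpa using this
        exact hsub _ _ (le_trans hxy hxW)
      have h2 : 0 ≤ W + (x - y) := by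
        have hyx : y - x ≤ y := by
          have := add_le_add_left hx (y - x)
          simpa using this
        have h := hsub _ _ (le_trans hyx hyW)
        have e : W - (y - x) = W + (x - y) := by ring
        rwa [e] at h
      have h3 : 0 ≤ (W - (x - y)) * (W + (x - y)) :=
        hcomp2 W hW _ _ h1 h2 (by ring)
      have e : (2 * 4 ^ 0 : R) ^ 2 * (x * y) + W ^ 2
          = (x + y) ^ 2 + (W - (x - y)) * (W + (x - y)) := by ring
      rw [e]
      exact hadd _ _ (hsq _) h3
    | succ n ih =>
      intro W x y hW hx hy hxW hyW
      have hxW' : 0 ≤ W - x := hsub _ _ hxW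
      have hyW' : 0 ≤ W - y := hsub _ _ hyW
      have haP : 0 ≤ x * (W - x) := hcomp W hW x (W - x) hx hxW' (by ring)
      have hbP : 0 ≤ y * (W - y) := hcomp W hW y (W - y) hy hyW' (by ring)
      have ha4P : 0 ≤ 4 * (x * (W - x)) := by
        have := posN 4 _ haP
        simpa using this
      have hb4P : 0 ≤ 4 * (y * (W - y)) := by
        have := posN 4 _ hbP
        simpa using this
      have ha4W : 4 * (x * (W - x)) ≤ W ^ 2 := by
        apply hsub'
        have e : W ^ 2 - 4 * (x * (W - x)) = (W - 2 * x) ^ 2 := by ring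
        rw [e]; exact hsq _
      have hb4W : 4 * (y * (W - y)) ≤ W ^ 2 := by
        apply hsub'
        have e : W ^ 2 - 4 * (y * (W - y)) = (W - 2 * y) ^ 2 := by ring
        rw [e]; exact hsq _
      have hW2 : ∀ r : R, 0 ≤ r * W ^ 2 → 0 ≤ r := by
        intro r hr
        have h1 : 0 ≤ r * W := by
          apply hW (r * W)
          have e : r * W * W = r * W ^ 2 := by ring
          rw [e]; exact hr
        exact hW r h1
      have hIH := ih (W ^ 2) (4 * (x * (W - x))) (4 * (y * (W - y))) hW2 ha4P hb4P ha4W hb4W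
      have hE : 0 ≤ y ^ 2 * (x * (W - x)) + x ^ 2 * (y * (W - y)) + x ^ 2 * y ^ 2 :=
        hadd _ _ (hadd _ _ (hsqmul y _ haP) (hsqmul x _ hbP)) (hsqmul x (y ^ 2) (hsq y))
      have hF : 0 ≤ (2 * 4 ^ (n + 1) : R) ^ 2 *
          (y ^ 2 * (x * (W - x)) + x ^ 2 * (y * (W - y)) + x ^ 2 * y ^ 2) :=
        hsqmul _ _ hE
      have hsum : 0 ≤ ((2 * 4 ^ (n + 1) : R) ^ 2 * (x * y) + W ^ 2) * W ^ 2 := by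
        have e : ((2 * 4 ^ (n + 1) : R) ^ 2 * (x * y) + W ^ 2) * W ^ 2
            = ((2 * 4 ^ n : R) ^ 2 * ((4 * (x * (W - x))) * (4 * (y * (W - y)))) + (W ^ 2) ^ 2)
              + (2 * 4 ^ (n + 1) : R) ^ 2 *
                (y ^ 2 * (x * (W - x)) + x ^ 2 * (y * (W - y)) + x ^ 2 * y ^ 2) := by
          ring
        rw [e]
        exact hadd _ _ hIH hF
      exact hW2 _ hsum
  -- main argument
  intro p q hp hq
  obtain ⟨s, ⟨t, ht, hst⟩, hsloc, hslb, hsub₂⟩ := hloc (p + q)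
  have hps : p ≤ s := by
    apply le_trans _ hsub₂
    have := add_le_add_left hq p
    simpa using this
  have hqs : q ≤ s := by
    apply le_trans _ hsub₂
    have := add_le_add_left hp q
    simpa [add_comm] using this
  apply harch (p * q) (s ^ 2)
  intro k hk
  have hC : 0 ≤ (2 * 4 ^ k : R) ^ 2 * (p * q) + s ^ 2 := lemC k s p q hsloc hp hq hps hqs
  set K : ℕ := (2 * 4 ^ k) ^ 2 with hK
  have hKcast : ((K : ℕ) : R) = (2 * 4 ^ k : R) ^ 2 := by push_cast [hK]; ring
  have hkK : k ≤ K := by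
    calc k ≤ 2 ^ k := (Nat.lt_two_pow_self (n := k)).le
    _ ≤ 4 ^ k := Nat.pow_le_pow_left (by norm_num) k
    _ ≤ 2 * 4 ^ k := Nat.le_mul_of_pos_left _ (by norm_num)
    _ ≤ (2 * 4 ^ k) ^ 2 := Nat.le_self_pow (by norm_num) _
  apply lemA K (le_trans hk hkK)
  have key : (K : R) * ((k : R) * (p * q) + s ^ 2)
      = (k : R) * ((K : R) * (p * q) + s ^ 2) + ((K - k : ℕ) : R) * s ^ 2 := by
    rw [Nat.cast_sub hkK]
    ring
  rw [key]
  refine hadd _ _ (posN k _ ?_) (posN (K - k) _ (hsq s))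
  rw [hKcast]
  exact hC
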